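/- Let p, q ∈ ℝ with 0 ≤ q < p² and √q < p, let J_{p,q} := (−√(p−√q), √(p−√q)) and h_{p,q}(s) := √(p − s² + √((p − s²)² − q)). Then the function s ↦ log h_{p,q}(s) is differentiable on J_{p,q} with derivative (log h_{p,q})'(s) = −s / √((s²−p)² − q) for all s ∈ J_{p,q}; equivalently, h_{p,q}'(s) = −s·h_{p,q}(s)/√((s²−p)² − q). -/

import Mathlib

/-- For `0 ≤ q < p²`, `√q < p`, the function `log h_{p,q}` is
differentiable on `J_{p,q}` with derivative `−s/√((s²−p)²−q)`; equivalently
`h_{p,q}'(s) = −s h_{p,q}(s)/√((s²−p)²−q)`. -/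
theorem stmt_16 (p q : ℝ) (hq0 : 0 ≤ q) (hq : q < p ^ 2) (hp : Real.sqrt q < p)
    (h : ℝ → ℝ)
    (hdef : ∀ s, h s = Real.sqrt (p - s ^ 2 + Real.sqrt ((p - s ^ 2) ^ 2 - q))) :
    ∀ s ∈ Set.Ioo (-Real.sqrt (p - Real.sqrt q)) (Real.sqrt (p - Real.sqrt q)),
      HasDerivAt (fun t => Real.log (h t))
        (-s / Real.sqrt ((s ^ 2 - p) ^ 2 - q)) s ∧
      HasDerivAt h (-s * h s / Real.sqrt ((s ^ 2 - p) ^ 2 - q)) s := by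
  intro s hs
  obtain ⟨hs1, hs2⟩ := hs
  have hEq : h = fun t => Real.sqrt (p - t ^ 2 + Real.sqrt ((p - t ^ 2) ^ 2 - q)) :=
    funext hdef
  have hpq : 0 ≤ p - Real.sqrt q := by linarith
  have hsq : s ^ 2 < p - Real.sqrt q := by
    have := abs_lt.mpr ⟨hs1, hs2⟩
    calc s ^ 2 = |s| ^ 2 := (sq_abs s).symm
    _ < Real.sqrt (p - Real.sqrt q) ^ 2 := by
        apply pow_lt_pow_left₀ this (abs_nonneg s)
        norm_num
    _ = p - Real.sqrt q := Real.sq_sqrt hpq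
  have hu : Real.sqrt q < p - s ^ 2 := by linarith
  have hu0 : 0 < p - s ^ 2 := lt_of_le_of_lt (Real.sqrt_nonneg q) hu
  have hR0 : 0 < (p - s ^ 2) ^ 2 - q := by
    have : q < (p - s ^ 2) ^ 2 := by
      calc q = Real.sqrt q ^ 2 := (Real.sq_sqrt hq0).symm
      _ < (p - s ^ 2) ^ 2 := by
          apply pow_lt_pow_left₀ hu (Real.sqrt_nonneg q)
          norm_num
    linarith
  set R := Real.sqrt ((p - s ^ 2) ^ 2 - q) with hRdef
  have hRpos : 0 < R := Real.sqrt_pos.mpr hR0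
  have hR2 : R ^ 2 = (p - s ^ 2) ^ 2 - q := Real.sq_sqrt hR0.le
  have hg0 : 0 < p - s ^ 2 + R := by positivity
  set G := Real.sqrt (p - s ^ 2 + R) with hGdef
  have hGpos : 0 < G := Real.sqrt_pos.mpr hg0
  have hG2 : G ^ 2 = p - s ^ 2 + R := Real.sq_sqrt hg0.le
  have hRR : Real.sqrt ((s ^ 2 - p) ^ 2 - q) = R := by
    rw [hRdef]; ring_nf
  have h1 : HasDerivAt (fun t => p - t ^ 2) (-(2 * s)) s := by
    have := (hasDerivAt_pow 2 s).const_sub p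
    simpa using this
  have h2 : HasDerivAt (fun t => (p - t ^ 2) ^ 2 - q)
      (2 * (p - s ^ 2) ^ 1 * -(2 * s)) s := (h1.pow 2).sub_const q
  have h3 : HasDerivAt (fun t => Real.sqrt ((p - t ^ 2) ^ 2 - q))
      (2 * (p - s ^ 2) ^ 1 * -(2 * s) / (2 * R)) s := h2.sqrt (ne_of_gt hR0)
  have h4 : HasDerivAt (fun t => p - t ^ 2 + Real.sqrt ((p - t ^ 2) ^ 2 - q))
      (-(2 * s) + 2 * (p - s ^ 2) ^ 1 * -(2 * s) / (2 * R)) s := h1.add h3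
  have h5 : HasDerivAt h
      ((-(2 * s) + 2 * (p - s ^ 2) ^ 1 * -(2 * s) / (2 * R)) / (2 * G)) s := by
    rw [hEq]; exact h4.sqrt (ne_of_gt hg0)
  have hhs : h s = G := hdef s
  have hderiv : (-(2 * s) + 2 * (p - s ^ 2) ^ 1 * -(2 * s) / (2 * R)) / (2 * G)
      = -s * G / R := by
    field_simp
    linear_combination s * hG2
  constructor
  · have := (h5.log (by rw [hhs]; exact ne_of_gt hGpos))
    rw [hderiv, hhs] at this
    convert this using 1
    rw [hRR]
    field_simp
  · rw [hRR, hhs, ← hderiv]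
    exact h5
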